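/- (Quadratic bounds for the Lyapunov function near the identity.) Let n ≥ 1. There exist constants ε₁ > 0, c₁ > 0, c₂ > 0 such that for every n×n complex unitary matrix X̃ with ‖X̃ − I‖ < ε₁ (Frobenius norm), one has det(I + X̃) ≠ 0 and c₁‖X̃ − I‖² ≤ V(X̃) ≤ c₂‖X̃ − I‖², where V(X̃) = −Tr((X̃ − I)²(X̃ + I)^{−2}). -/

import Mathlib

open Matrix

/-- The Frobenius norm of a complex matrix. -/
noncomputable def frobNorm {n : ℕ} (A : Matrix (Fin n) (Fin n) ℂ) : ℝ :=
  Real.sqrt (∑ i, ∑ j, ‖A i j‖ ^ 2)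

/-- The Lyapunov function `V(X̃) = -Tr ((X̃ - I)² (X̃ + I)⁻²)` (its value is real for unitary
`X̃` with no eigenvalue `-1`; we take the real part). -/
noncomputable def lyapV {n : ℕ} (X : Matrix (Fin n) (Fin n) ℂ) : ℝ :=
  (-(((X - 1) * (X - 1)) * ((X + 1)⁻¹ * (X + 1)⁻¹)).trace).re

section aux

attribute [local instance] Matrix.frobeniusSeminormedAddCommGroup
  Matrix.frobeniusNormedAddCommGroup Matrix.frobeniusNormedSpace Matrix.frobeniusNormedRing
  Matrix.frobeniusNormedAlgebra

variable {n : ℕ}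

lemma frobNorm_eq (A : Matrix (Fin n) (Fin n) ℂ) : frobNorm A = ‖A‖ := by
  rw [frobNorm, Matrix.frobenius_norm_def, Real.sqrt_eq_rpow]
  norm_num [Real.rpow_two]

lemma frob_norm_one : ‖(1 : Matrix (Fin n) (Fin n) ℂ)‖ = Real.sqrt n := by
  have := congr_arg ((↑) : NNReal → ℝ) (Matrix.frobenius_nnnorm_one (n := Fin n) (α := ℂ))
  simpa [Real.coe_sqrt] using this

theorem lyapunov_quadratic_bounds' (hn : 1 ≤ n) :
    ∃ (ε₁ c₁ c₂ : ℝ), 0 < ε₁ ∧ 0 < c₁ ∧ 0 < c₂ ∧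
      ∀ X : Matrix (Fin n) (Fin n) ℂ,
        X ∈ Matrix.unitaryGroup (Fin n) ℂ →
        frobNorm (X - 1) < ε₁ →
        (1 + X).det ≠ 0 ∧
        c₁ * frobNorm (X - 1) ^ 2 ≤ lyapV X ∧
        lyapV X ≤ c₂ * frobNorm (X - 1) ^ 2 := by
  have hsn : (0:ℝ) < Real.sqrt n := Real.sqrt_pos.2 (by exact_mod_cast hn)
  refine ⟨1, (1 + 2 * Real.sqrt n)⁻¹ ^ 2, n, one_pos, by positivity, by exact_mod_cast hn, ?_⟩
  intro X hX hXe
  rw [frobNorm_eq] at hXe ⊢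
  -- invertibility of 1 + X
  have hdet : (1 + X).det ≠ 0 := by
    have ht : ‖(2:ℂ)⁻¹ • (1 - X)‖ < 1 := by
      rw [norm_smul, ← norm_neg (1 - X), neg_sub]
      have h2 : ‖(2:ℂ)⁻¹‖ = 2⁻¹ := by norm_num
      rw [h2]
      nlinarith [norm_nonneg (X - 1)]
    have hu : IsUnit (1 - (2:ℂ)⁻¹ • (1 - X)) := isUnit_one_sub_of_norm_lt_one ht
    have h2 : (1 : Matrix (Fin n) (Fin n) ℂ) - (2:ℂ)⁻¹ • (1 - X) = (2:ℂ)⁻¹ • (1 + X) := by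
      rw [smul_sub, smul_add]; module
    rw [h2, Matrix.isUnit_iff_isUnit_det, Matrix.det_smul, isUnit_iff_ne_zero,
      mul_ne_zero_iff] at hu
    exact hu.2
  refine ⟨hdet, ?_⟩
  have hdet' : IsUnit (1 + X).det := isUnit_iff_ne_zero.2 hdet
  -- basic matrices
  set B : Matrix (Fin n) (Fin n) ℂ := (X + 1)⁻¹ with hB
  have hBeq : B = (1 + X)⁻¹ := by rw [hB, add_comm]
  have hBl : B * (1 + X) = 1 := by rw [hBeq]; exact Matrix.nonsing_inv_mul _ hdet'
  have hBr : (1 + X) * B = 1 := by rw [hBeq]; exact Matrix.mul_nonsing_inv _ hdet'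
  have hcomm : B * (X - 1) = (X - 1) * B := by
    have h1 : B * ((X - 1) * ((1 + X) * B)) = (B * (1 + X)) * ((X - 1) * B) := by
      have : (X - 1) * (1 + X) = (1 + X) * (X - 1) := by noncomm_ring
      rw [← mul_assoc, ← mul_assoc, mul_assoc B, this, ← mul_assoc, mul_assoc]
    rw [hBr, hBl, mul_one, one_mul] at h1
    exact h1
  set M : Matrix (Fin n) (Fin n) ℂ := (X - 1) * B with hM
  have hcomm2 : B * (X - 1) = (X - 1) * B := hcomm.trans hM
  have hMX : M * (1 + X) = X - 1 := by rw [hM, mul_assoc, hBl, mul_one]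
  -- unitarity
  have hXs : Xᴴ * X = 1 := by
    have := hX.1; rwa [Matrix.star_eq_conjTranspose] at this
  have hXs' : X * Xᴴ = 1 := by
    have := hX.2; rwa [Matrix.star_eq_conjTranspose] at this
  -- skew-hermitian
  have hMH : Mᴴ = -M := by
    have hXinv : (Xᴴ)⁻¹ = X := Matrix.inv_eq_right_inv hXs
    have h1 : (1 + Xᴴ) = Xᴴ * (1 + X) := by rw [mul_add, mul_one, hXs, add_comm]
    have h2 : (1 + Xᴴ)⁻¹ = B * X := by
      rw [h1, Matrix.mul_inv_rev, hXinv, hBeq]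
    have h3 : Xᴴ - 1 = Xᴴ * (1 - X) := by rw [mul_sub, mul_one, hXs]
    calc Mᴴ = Bᴴ * (X - 1)ᴴ := by rw [hM, Matrix.conjTranspose_mul]
      _ = (1 + Xᴴ)⁻¹ * (Xᴴ - 1) := by
          rw [hBeq, Matrix.conjTranspose_nonsing_inv]
          simp [Matrix.conjTranspose_add, Matrix.conjTranspose_sub]
      _ = B * (X * Xᴴ) * (1 - X) := by rw [h2, h3, mul_assoc, mul_assoc, mul_assoc]
      _ = B * (1 - X) := by rw [hXs', mul_one]
      _ = -(B * (X - 1)) := by rw [← mul_neg, neg_sub]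
      _ = -M := by rw [hcomm, hM]
  -- lyapV X = ‖M‖²
  have hMM : ((X - 1) * (X - 1)) * ((X + 1)⁻¹ * (X + 1)⁻¹) = M * M := by
    rw [hM, ← hB]
    simp only [mul_assoc]
    rw [← mul_assoc B (X - 1) B, hcomm2]
    simp only [mul_assoc]
  have hV : lyapV X = ‖M‖ ^ 2 := by
    have htr : -(M * M).trace = (Mᴴ * M).trace := by rw [hMH, neg_mul, trace_neg]
    have hre : ((Mᴴ * M).trace).re = ∑ i, ∑ j, ‖M j i‖ ^ 2 := by
      rw [Matrix.trace]
      simp only [Matrix.diag_apply, Matrix.mul_apply, Matrix.conjTranspose_apply]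
      rw [Complex.re_sum]
      congr 1; ext i
      rw [Complex.re_sum]
      congr 1; ext j
      rw [RCLike.star_def, RCLike.conj_mul]
      norm_cast
    have hnn : ‖M‖ ^ 2 = ∑ i, ∑ j, ‖M i j‖ ^ 2 := by
      rw [← frobNorm_eq, frobNorm, Real.sq_sqrt (by positivity)]
    rw [lyapV, hMM, htr, hre, hnn, Finset.sum_comm]
  rw [hV]
  -- bound on B
  have hBn : ‖B‖ ≤ Real.sqrt n := by
    have hBX : B * X = 1 - B := by
      rw [eq_sub_iff_add_eq, add_comm]
      have := hBl; rwa [mul_add, mul_one] at this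
    have key : (2:ℂ) • B = 1 - B * (X - 1) := by
      rw [mul_sub, hBX, mul_one]; module
    have h1 : ‖(2:ℂ) • B‖ = 2 * ‖B‖ := by
      rw [norm_smul]; norm_num
    have h2 : ‖(1 : Matrix (Fin n) (Fin n) ℂ) - B * (X - 1)‖ ≤ Real.sqrt n + ‖B‖ * ‖X - 1‖ := by
      refine (norm_sub_le _ _).trans ?_
      rw [frob_norm_one]
      exact add_le_add (le_refl _) (norm_mul_le _ _)
    have h3 : 2 * ‖B‖ ≤ Real.sqrt n + ‖B‖ * ‖X - 1‖ := by rw [← h1, key]; exact h2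
    nlinarith [norm_nonneg B, norm_nonneg (X - 1)]
  constructor
  · -- lower bound
    have h1 : ‖X - 1‖ ≤ ‖M‖ * (1 + 2 * Real.sqrt n) := by
      have h2 : ‖(1 : Matrix (Fin n) (Fin n) ℂ) + X‖ ≤ ‖X - 1‖ + 2 * Real.sqrt n := by
        have : (1 : Matrix (Fin n) (Fin n) ℂ) + X = (X - 1) + (2:ℂ) • 1 := by module
        rw [this]
        refine (norm_add_le _ _).trans ?_
        have : ‖(2:ℂ) • (1 : Matrix (Fin n) (Fin n) ℂ)‖ = 2 * Real.sqrt n := by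
          rw [norm_smul, frob_norm_one]; norm_num
        rw [this]
      calc ‖X - 1‖ = ‖M * (1 + X)‖ := by rw [hMX]
        _ ≤ ‖M‖ * ‖1 + X‖ := norm_mul_le _ _
        _ ≤ ‖M‖ * (‖X - 1‖ + 2 * Real.sqrt n) :=
            mul_le_mul_of_nonneg_left h2 (norm_nonneg _)
        _ ≤ ‖M‖ * (1 + 2 * Real.sqrt n) := by
            refine mul_le_mul_of_nonneg_left ?_ (norm_nonneg _)
            linarith
    have hpos : (0:ℝ) < 1 + 2 * Real.sqrt n := by positivity
    rw [inv_pow, ← div_eq_inv_mul, div_le_iff₀ (by positivity)]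
    nlinarith [norm_nonneg M, norm_nonneg (X - 1)]
  · -- upper bound
    have h1 : ‖M‖ ≤ ‖X - 1‖ * Real.sqrt n :=
      (norm_mul_le _ _).trans (mul_le_mul_of_nonneg_left hBn (norm_nonneg _))
    have h2 : Real.sqrt n ^ 2 = n := Real.sq_sqrt (Nat.cast_nonneg n)
    nlinarith [norm_nonneg M, norm_nonneg (X - 1), hsn]

end aux

theorem lyapunov_quadratic_bounds (n : ℕ) (hn : 1 ≤ n) :
    ∃ (ε₁ c₁ c₂ : ℝ), 0 < ε₁ ∧ 0 < c₁ ∧ 0 < c₂ ∧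
      ∀ X : Matrix (Fin n) (Fin n) ℂ,
        X ∈ Matrix.unitaryGroup (Fin n) ℂ →
        frobNorm (X - 1) < ε₁ →
        (1 + X).det ≠ 0 ∧
        c₁ * frobNorm (X - 1) ^ 2 ≤ lyapV X ∧
        lyapV X ≤ c₂ * frobNorm (X - 1) ^ 2 :=
  lyapunov_quadratic_bounds' hn
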